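/- Let (R,P_Ω) be a multiple Rota-Baxter algebra of pair weight (λ_Ω,λ_Ω), and for each i in an index set I let A_i = (a_{i,ω})_{ω∈Ω} be a finitely supported family of elements of k. Define P_i := Σ_{ω∈Ω} a_{i,ω} P_ω and λ_i := Σ_{ω∈Ω} a_{i,ω} λ_ω. Then (R,(P_i)_{i∈I}) is a multiple Rota-Baxter algebra of pair weight (λ_I,λ_I), i.e., P_i(r₁)P_j(r₂) = P_i(r₁P_j(r₂)) + P_j(P_i(r₁)r₂) + λ_j P_i(r₁r₂) + λ_i P_j(r₁r₂) for all r₁,r₂ ∈ R and i,j ∈ I. -/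
import Mathlib


/-- Finitely supported linear combinations of the operators of a
multiple Rota-Baxter algebra again form a multiple Rota-Baxter algebra, with the
correspondingly combined weights. -/
theorem linear_combination_multiple_rota_baxter_algebra
    (k : Type*) [CommRing k]
    (R : Type*) [Ring R] [Algebra k R]
    (Ω : Type*) [Nonempty Ω]
    (lam : Ω → k)
    (P : Ω → R →ₗ[k] R)
    (hP : ∀ (α β : Ω) (r₁ r₂ : R),
      P α r₁ * P β r₂ =
        P α (r₁ * P β r₂) + P β (P α r₁ * r₂)
          + lam β • P α (r₁ * r₂) + lam α • P β (r₁ * r₂))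
    (I : Type*)
    (a : I → Ω →₀ k)
    (Q : I → R →ₗ[k] R) (μ : I → k)
    (hQ : ∀ i : I, Q i = (a i).sum fun ω c => c • P ω)
    (hμ : ∀ i : I, μ i = (a i).sum fun ω c => c * lam ω) :
    ∀ (i j : I) (r₁ r₂ : R),
      Q i r₁ * Q j r₂ =
        Q i (r₁ * Q j r₂) + Q j (Q i r₁ * r₂)
          + μ j • Q i (r₁ * r₂) + μ i • Q j (r₁ * r₂) := by
  intro i j r₁ r₂
  simp only [hQ, hμ, Finsupp.sum, LinearMap.coe_sum, Finset.sum_apply,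
    LinearMap.smul_apply, Finset.mul_sum, Finset.sum_mul, map_sum, map_smul,
    Finset.smul_sum, smul_smul, mul_smul_comm, smul_mul_assoc, Finset.sum_smul]
  conv_rhs => rw [Finset.sum_comm (s := (a i).support) (t := (a j).support)]
  conv_rhs => rw [Finset.sum_comm (s := (a i).support) (t := (a j).support)]
  rw [← Finset.sum_add_distrib, ← Finset.sum_add_distrib, ← Finset.sum_add_distrib]
  refine Finset.sum_congr rfl fun σ _ => ?_
  rw [← Finset.sum_add_distrib, ← Finset.sum_add_distrib, ← Finset.sum_add_distrib]
  refine Finset.sum_congr rfl fun ω _ => ?_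
  rw [hP ω σ r₁ r₂]
  simp only [smul_add, smul_smul]
  match_scalars <;> ring
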